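/- Let V and W be G-graded vector spaces of dimension m associated to m-tuples (g_1,…,g_m) and (h_1,…,h_m) of degrees of homogeneous bases. Then END(V) ≅ END(W) as G-graded algebras if and only if there exist σ ∈ G and a permutation π of {1,…,m} such that h_i = g_{π(i)} σ for all i. -/

import Mathlib

/-- The `σ`-component of the graded endomorphism algebra `END(V)` of a
`G`-graded vector space `V = ⊕ 𝒱 g`:
`END(V)_σ = {f ∈ End(V) | f(V_g) ⊆ V_{σg} for all g}`. -/
def ENDdeg {k : Type*} [Field k] {G : Type*} [Group G]
    {V : Type*} [AddCommGroup V] [Module k V]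
    (𝒱 : G → Submodule k V) (σ : G) : Submodule k (Module.End k V) where
  carrier := {f | ∀ g : G, ∀ v ∈ 𝒱 g, f v ∈ 𝒱 (σ * g)}
  add_mem' := by
    intro a b ha hb g v hv
    simpa using (𝒱 (σ * g)).add_mem (ha g v hv) (hb g v hv)
  zero_mem' := by intro g v hv; simp
  smul_mem' := by
    intro c f hf g v hv
    simpa using (𝒱 (σ * g)).smul_mem c (hf g v hv)


section Aux

variable {k : Type*} [Field k] {G : Type*} [Group G] [DecidableEq G]
variable {V W : Type*} [AddCommGroup V] [Module k V] [AddCommGroup W] [Module k W]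

lemma mem_ENDdeg {𝒱 : G → Submodule k V} {σ : G} {f : Module.End k V} :
    f ∈ ENDdeg 𝒱 σ ↔ ∀ g : G, ∀ v ∈ 𝒱 g, f v ∈ 𝒱 (σ * g) := Iff.rfl

lemma grading_eq_span {m : ℕ} (𝒱 : G → Submodule k V) (hV : DirectSum.IsInternal 𝒱)
    (b : Module.Basis (Fin m) k V) (g : Fin m → G) (hb : ∀ i, b i ∈ 𝒱 (g i)) (x : G) :
    𝒱 x = Submodule.span k (Set.range fun j : {i // g i = x} => b ↑j) := by
  set S : G → Submodule k V :=
    fun y => Submodule.span k (Set.range fun j : {i // g i = y} => b ↑j) with hS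
  have hSle : ∀ y, S y ≤ 𝒱 y := by
    intro y
    refine Submodule.span_le.mpr ?_
    rintro _ ⟨⟨i, rfl⟩, rfl⟩
    exact hb i
  refine le_antisymm ?_ (hSle x)
  intro v hv
  have htop : v ∈ ⨆ y, S y := by
    have : (⨆ y, S y) = ⊤ := by
      refine top_unique ?_
      rw [← b.span_eq]
      refine Submodule.span_le.mpr ?_
      rintro _ ⟨i, rfl⟩
      exact Submodule.mem_iSup_of_mem (g i)
        (Submodule.subset_span ⟨⟨i, rfl⟩, rfl⟩)
    simp [this]
  have hle : (⨆ y, S y) ≤ S x ⊔ ⨆ y, ⨆ _ : y ≠ x, 𝒱 y := by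
    refine iSup_le fun y => ?_
    by_cases hy : y = x
    · subst hy; exact le_sup_left
    · exact le_sup_of_le_right (le_trans (hSle y)
        (le_iSup_of_le y (by simp [hy])))
  obtain ⟨s, hs, t, ht, hst⟩ := Submodule.mem_sup.mp (hle htop)
  have htv : t ∈ 𝒱 x := by
    have : t = v - s := by rw [← hst]; abel
    exact this ▸ Submodule.sub_mem _ hv (hSle x hs)
  have : t = 0 :=
    Submodule.disjoint_def.mp (hV.submodule_iSupIndep x) t htv ht
  rw [← hst, this, add_zero]
  exact hs

lemma grading_finrank {m : ℕ} (𝒱 : G → Submodule k V)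
    (hV : DirectSum.IsInternal 𝒱)
    (b : Module.Basis (Fin m) k V) (g : Fin m → G) (hb : ∀ i, b i ∈ 𝒱 (g i)) (x : G) :
    Module.finrank k (𝒱 x) = Fintype.card {i // g i = x} := by
  rw [grading_eq_span 𝒱 hV b g hb x]
  exact finrank_span_eq_card
    (b.linearIndependent.comp (Subtype.val : {i // g i = x} → Fin m) Subtype.val_injective)

lemma exists_end_apply_eq {v : V} (hv : v ≠ 0) (u : V) :
    ∃ f : Module.End k V, f v = u := by
  obtain ⟨φ, hφ⟩ : ∃ φ : Module.Dual k V, φ v ≠ 0 := by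
    by_contra hcon
    push_neg at hcon
    exact hv ((Module.forall_dual_apply_eq_zero_iff k v).mp hcon)
  refine ⟨((φ v)⁻¹ • φ).smulRight u, ?_⟩
  simp [inv_mul_cancel₀ hφ]

/-- conjugation by a linear equivalence, as an algebra equivalence of endomorphism algebras -/
noncomputable def conjAlg (φ : V ≃ₗ[k] W) : Module.End k V ≃ₐ[k] Module.End k W :=
  { φ.conj with
    map_mul' := fun f f' => by
      ext w
      simp [LinearEquiv.conj_apply_apply, Module.End.mul_apply]
    commutes' := fun r => by
      ext w
      simp [LinearEquiv.conj_apply_apply, Module.algebraMap_end_apply] }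

lemma conjAlg_apply (φ : V ≃ₗ[k] W) (f : Module.End k V) (w : W) :
    conjAlg φ f w = φ (f (φ.symm w)) := rfl

end Aux

set_option maxHeartbeats 1000000 in
/-- If `V`, `W` are `G`-graded vector spaces of dimension `m` with
homogeneous bases of degrees `(g_1,…,g_m)` and `(h_1,…,h_m)`, then
`END(V) ≅ END(W)` as `G`-graded algebras iff there exist `σ ∈ G` and a
permutation `π` of `{1,…,m}` such that `h_i = g_{π(i)} σ` for all `i`. -/
theorem END_iso_iff_tuples {k : Type*} [Field k] {G : Type*} [Group G] [DecidableEq G]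
    {V W : Type*} [AddCommGroup V] [Module k V] [AddCommGroup W] [Module k W] {m : ℕ}
    (𝒱 : G → Submodule k V) (hV : DirectSum.IsInternal 𝒱)
    (𝒲 : G → Submodule k W) (hW : DirectSum.IsInternal 𝒲)
    (b : Module.Basis (Fin m) k V) (g : Fin m → G) (hb : ∀ i, b i ∈ 𝒱 (g i))
    (c : Module.Basis (Fin m) k W) (h : Fin m → G) (hc : ∀ i, c i ∈ 𝒲 (h i)) :
    (∃ e : Module.End k V ≃ₐ[k] Module.End k W,
        ∀ σ : G, Submodule.map e.toLinearMap (ENDdeg 𝒱 σ) = ENDdeg 𝒲 σ)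
      ↔ ∃ (σ : G) (π : Equiv.Perm (Fin m)), ∀ i, h i = g (π i) * σ := by
  have hcoordV : ∀ (i : Fin m) (x : G), x ≠ g i → ∀ v ∈ 𝒱 x, b.coord i v = 0 := by
    intro i x hx v hv
    rw [grading_eq_span 𝒱 hV b g hb x] at hv
    have hker : Submodule.span k (Set.range fun j : {i // g i = x} => b ↑j)
        ≤ LinearMap.ker (b.coord i) := by
      refine Submodule.span_le.mpr ?_
      rintro _ ⟨⟨j, hj⟩, rfl⟩
      have hji : j ≠ i := fun hji => hx (hji ▸ hj).symm
      simp [LinearMap.mem_ker, Module.Basis.coord_apply, Module.Basis.repr_self,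
        Finsupp.single_eq_of_ne hji.symm]
    exact hker hv
  constructor
  · rintro ⟨e, he⟩
    rcases Nat.eq_zero_or_pos m with hm | hm
    · subst hm; exact ⟨1, Equiv.refl _, fun i => i.elim0⟩
    set i0 : Fin m := ⟨0, hm⟩
    -- the degree-shifting matrix units
    set F : Fin m → Module.End k V := fun i => (b.coord i0).smulRight (b i) with hFdef
    have hF : ∀ i, F i ∈ ENDdeg 𝒱 (g i * (g i0)⁻¹) := by
      intro i x v hv
      by_cases hx : x = g i0
      · subst hx
        rw [inv_mul_cancel_right]
        exact Submodule.smul_mem _ _ (hb i)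
      · show (b.coord i0 v) • b i ∈ _
        rw [hcoordV i0 x hx v hv, zero_smul]
        exact Submodule.zero_mem _
    set p : Module.End k V := F i0 with hpdef
    have hpb : ∀ v, p v = (b.coord i0 v) • b i0 := fun v => rfl
    have hpp : p * p = p := by
      ext v
      simp [hpb, Module.End.mul_apply, map_smul, Module.Basis.coord_apply, Module.Basis.repr_self,
        smul_smul]
    set q : Module.End k W := e p with hqdef
    have hqq : q * q = q := by rw [hqdef, ← map_mul, hpp]
    have hqne : q ≠ 0 := by
      intro h0
      have : p = 0 := by
        apply e.injective; rw [← hqdef, h0, map_zero]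
      have hb0 : b i0 = 0 := by
        have := congrArg (fun f : Module.End k V => f (b i0)) this
        simpa [hpb, Module.Basis.coord_apply, Module.Basis.repr_self] using this
      exact b.ne_zero i0 hb0
    obtain ⟨w1, hw1⟩ : ∃ w1, q w1 ≠ 0 := by
      by_contra h0
      push_neg at h0
      exact hqne (LinearMap.ext h0)
    set w₀ : W := q w1 with hw₀def
    have hqw₀ : q w₀ = w₀ := by
      rw [hw₀def, ← Module.End.mul_apply, hqq]
    have hw₀ne : w₀ ≠ 0 := hw1
    -- the intertwiner Φ
    set Φ : V →ₗ[k] W :=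
      { toFun := fun v => e ((b.coord i0).smulRight v) w₀
        map_add' := by
          intro v v'
          have : (b.coord i0).smulRight (v + v')
              = (b.coord i0).smulRight v + (b.coord i0).smulRight v' := by
            ext u; simp [smul_add]
          show e ((b.coord i0).smulRight (v + v')) w₀ = _
          rw [this, map_add]; rfl
        map_smul' := by
          intro a v
          have : (b.coord i0).smulRight (a • v) = a • (b.coord i0).smulRight v := by
            ext u
            simp only [LinearMap.smulRight_apply, LinearMap.smul_apply]
            exact smul_comm _ _ _
          show e ((b.coord i0).smulRight (a • v)) w₀ = _
          rw [this, map_smul]; rfl } with hΦdef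
    have hΦapply : ∀ v, Φ v = e ((b.coord i0).smulRight v) w₀ := fun v => rfl
    have hEq : ∀ (f : Module.End k V) (v : V), e f (Φ v) = Φ (f v) := by
      intro f v
      have hcomp : (b.coord i0).smulRight (f v) = f * ((b.coord i0).smulRight v) := by
        ext u; simp [Module.End.mul_apply, map_smul]
      rw [hΦapply, hΦapply, hcomp, map_mul, Module.End.mul_apply]
    have hΦb0 : Φ (b i0) = w₀ := hqw₀
    have hΦF : ∀ i, Φ (b i) = e (F i) w₀ := fun i => rfl
    have hinj : Function.Injective Φ := by
      have hker : ∀ v, Φ v = 0 → v = 0 := by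
        intro v hv
        by_contra hvne
        obtain ⟨f, hf⟩ := exists_end_apply_eq (k := k) hvne (b i0)
        have : w₀ = 0 := by
          rw [← hΦb0, ← hf, ← hEq, hv, map_zero]
        exact hw₀ne this
      intro a b hab
      have : Φ (a - b) = 0 := by rw [map_sub, hab, sub_self]
      exact sub_eq_zero.mp (hker _ this)
    have hsur : Function.Surjective Φ := by
      intro u
      obtain ⟨f', hf'⟩ := exists_end_apply_eq (k := k) hw₀ne u
      refine ⟨(e.symm f') (b i0), ?_⟩
      rw [← hEq, e.apply_symm_apply, hΦb0, hf']
    set φ : V ≃ₗ[k] W := LinearEquiv.ofBijective Φ ⟨hinj, hsur⟩ with hφdef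
    -- q has degree 1 and range k • w₀
    have hp1 : p ∈ ENDdeg 𝒱 1 := by
      have := hF i0
      rwa [mul_inv_cancel] at this
    have hq1 : q ∈ ENDdeg 𝒲 1 := by
      rw [← he 1]
      exact Submodule.mem_map_of_mem hp1
    have hqform : ∀ w : W, ∃ a : k, q w = a • w₀ := by
      intro w
      obtain ⟨v, rfl⟩ := hsur w
      refine ⟨b.coord i0 v, ?_⟩
      have : q (Φ v) = Φ (p v) := hEq p v
      rw [this, hpb, map_smul, hΦb0]
    -- w₀ is homogeneous
    obtain ⟨y₀, hy₀⟩ : ∃ y₀ : G, w₀ ∈ 𝒲 (1 * y₀) := by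
      have hmem : w₀ ∈ ⨆ y, 𝒲 y := by
        rw [hW.submodule_iSup_eq_top]; trivial
      rw [Submodule.mem_iSup_iff_exists_finsupp] at hmem
      obtain ⟨μ, hμ, hμsum⟩ := hmem
      have hsum : w₀ = μ.sum fun y wy => q wy := by
        conv_lhs => rw [← hqw₀, ← hμsum]
        exact map_finsuppSum q μ _
      obtain ⟨y, _, hy⟩ : ∃ y ∈ μ.support, q (μ y) ≠ 0 := by
        by_contra h0
        push_neg at h0
        apply hw₀ne
        rw [hsum, Finsupp.sum]
        exact Finset.sum_eq_zero h0
      obtain ⟨a, ha⟩ := hqform (μ y)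
      have hane : a ≠ 0 := by
        intro h0; rw [h0, zero_smul] at ha; exact hy ha
      refine ⟨y, ?_⟩
      have hw₀eq : w₀ = a⁻¹ • q (μ y) := by
        rw [ha, smul_smul, inv_mul_cancel₀ hane, one_smul]
      rw [hw₀eq]
      exact Submodule.smul_mem _ _ (hq1 y (μ y) (hμ y))
    set σ : G := (g i0)⁻¹ * (1 * y₀) with hσdef
    -- each φ (b i) is homogeneous of degree g i * σ
    have hwi : ∀ i, Φ (b i) ∈ 𝒲 (g i * σ) := by
      intro i
      have hFi : e (F i) ∈ ENDdeg 𝒲 (g i * (g i0)⁻¹) := by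
        rw [← he (g i * (g i0)⁻¹)]
        exact Submodule.mem_map_of_mem (hF i)
      have := hFi (1 * y₀) w₀ hy₀
      rw [← hΦF i] at this
      have harr : g i * (g i0)⁻¹ * (1 * y₀) = g i * σ := by
        rw [hσdef, mul_assoc]
      rwa [harr] at this
    -- compare fiber cardinalities via finrank
    set d : Module.Basis (Fin m) k W := b.map φ with hddef
    have hd : ∀ i, d i ∈ 𝒲 (g i * σ) := by
      intro i
      rw [hddef, Module.Basis.map_apply]
      exact hwi i
    have hcard : ∀ y : G,
        Fintype.card {i // h i = y} = Fintype.card {i // g i * σ = y} := by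
      intro y
      rw [← grading_finrank 𝒲 hW c h hc y,
        ← grading_finrank 𝒲 hW d (fun i => g i * σ) hd y]
    refine ⟨σ, Equiv.ofFiberEquiv fun y => Fintype.equivOfCardEq (hcard y), fun i => ?_⟩
    exact (Equiv.ofFiberEquiv_map (fun y => Fintype.equivOfCardEq (hcard y)) i).symm
  · rintro ⟨σ, π, hπ⟩
    set φ : V ≃ₗ[k] W := b.equiv c π.symm with hφdef
    have hφb : ∀ j, φ (b j) = c (π.symm j) := fun j => b.equiv_apply j c π.symm
    have hφsymm : ∀ i, φ.symm (c i) = b (π i) := by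
      intro i
      rw [hφdef, Module.Basis.equiv_symm]
      simpa using c.equiv_apply i b π.symm.symm
    have hφV : ∀ x : G, ∀ v ∈ 𝒱 x, φ v ∈ 𝒲 (x * σ) := by
      intro x v hv
      rw [grading_eq_span 𝒱 hV b g hb x] at hv
      induction hv using Submodule.span_induction with
      | mem w hw =>
        obtain ⟨⟨j, hj⟩, rfl⟩ := hw
        rw [hφb j]
        have : h (π.symm j) = x * σ := by
          rw [hπ (π.symm j), Equiv.apply_symm_apply, hj]
        exact this ▸ hc (π.symm j)
      | zero => simp
      | add u w _ _ hu hw => rw [map_add]; exact Submodule.add_mem _ hu hw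
      | smul a u _ hu => rw [map_smul]; exact Submodule.smul_mem _ _ hu
    have hφW : ∀ y : G, ∀ w ∈ 𝒲 y, φ.symm w ∈ 𝒱 (y * σ⁻¹) := by
      intro y w hw
      rw [grading_eq_span 𝒲 hW c h hc y] at hw
      induction hw using Submodule.span_induction with
      | mem u hu =>
        obtain ⟨⟨i, hi⟩, rfl⟩ := hu
        rw [hφsymm i]
        have : g (π i) = y * σ⁻¹ := by
          rw [← hi, hπ i, mul_inv_cancel_right]
        exact this ▸ hb (π i)
      | zero => simp
      | add u w _ _ hu hw => rw [map_add]; exact Submodule.add_mem _ hu hw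
      | smul a u _ hu => rw [map_smul]; exact Submodule.smul_mem _ _ hu
    refine ⟨conjAlg φ, fun τ => le_antisymm ?_ ?_⟩
    · rintro _ ⟨f, hf, rfl⟩
      intro y w hw
      show (conjAlg φ f) w ∈ 𝒲 (τ * y)
      rw [conjAlg_apply]
      have h1 := hφW y w hw
      have h2 := hf _ _ h1
      have h3 := hφV _ _ h2
      have harr : τ * (y * σ⁻¹) * σ = τ * y := by
        simp [mul_assoc]
      rwa [harr] at h3
    · intro f' hf'
      refine ⟨φ.symm.conj f', ?_, ?_⟩
      · intro x v hv
        have h1 := hφV x v hv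
        have h2 := hf' _ _ h1
        have h3 := hφW _ _ h2
        have harr : τ * (x * σ) * σ⁻¹ = τ * x := by
          simp [mul_assoc]
        rw [harr] at h3
        simpa [LinearEquiv.conj_apply_apply] using h3
      · show (conjAlg φ) (φ.symm.conj f') = f'
        ext w
        rw [conjAlg_apply]
        simp [LinearEquiv.conj_apply_apply]
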